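/- Let p ≥ 1 be an integer and let F = pK1 + K2. Let Q be the graph obtained from two disjoint copies of the star K_{1,p} by adding an edge between their central vertices u and v, and let G' be the disjoint union of a graph G and Q. Then G' has a spanning subgraph with at least one edge satisfying the F-closure if and only if G has no independent set of p vertices. -/

import Mathlib

open SimpleGraph

/-- A spanning subgraph `H` of `G` *satisfies the `F`-closure* if for every vertex subset `S`
such that `H[S]` is isomorphic to `F`, the induced subgraph `G[S]` is not isomorphic to `F`. -/
def SatisfiesClosure {V W : Type*} (G H : SimpleGraph V) (F : SimpleGraph W) : Prop :=
  ∀ S : Set V, Nonempty ((H.induce S) ≃g F) → ¬ Nonempty ((G.induce S) ≃g F)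

/-- The graph `pK1 + K2`: the disjoint union of `p` isolated vertices and one edge. -/
def pK1K2 (p : ℕ) : SimpleGraph (Fin p ⊕ Fin 2) :=
  SimpleGraph.fromRel (fun a b => a.isRight ∧ b.isRight)

/-- The disjoint union of two simple graphs. -/
def sumGraph {α β : Type*} (G : SimpleGraph α) (K : SimpleGraph β) : SimpleGraph (α ⊕ β) :=
  SimpleGraph.fromRel (fun a b =>
    (∃ x y, a = Sum.inl x ∧ b = Sum.inl y ∧ G.Adj x y) ∨
    (∃ x y, a = Sum.inr x ∧ b = Sum.inr y ∧ K.Adj x y))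

/-- The graph `Q`: two disjoint copies of the star `K_{1,p}` whose centers `Sum.inl 0` and
`Sum.inl 1` are joined by an edge; the leaves `Sum.inr (i, j)` are adjacent to center
`Sum.inl i`. -/
def starStarQ (p : ℕ) : SimpleGraph (Fin 2 ⊕ (Fin 2 × Fin p)) :=
  SimpleGraph.fromRel (fun a b =>
    (a = Sum.inl 0 ∧ b = Sum.inl 1) ∨ (∃ i j, a = Sum.inl i ∧ b = Sum.inr (i, j)))

/-- For `F = pK1 + K2` and `G' = G + Q`, the graph `G'` has a spanning subgraph with at least one
edge satisfying the `F`-closure iff `G` has no independent set of `p` vertices. -/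
-- ===== adjacency lemmas =====

lemma sumGraph_adj_ll {α β : Type*} (G : SimpleGraph α) (K : SimpleGraph β) {x y : α} :
    (sumGraph G K).Adj (Sum.inl x) (Sum.inl y) ↔ G.Adj x y := by
  simp only [sumGraph, fromRel_adj]
  constructor
  · rintro ⟨hne, (⟨x', y', hx, hy, h⟩ | ⟨x', y', hx, hy, h⟩) |
      (⟨x', y', hx, hy, h⟩ | ⟨x', y', hx, hy, h⟩)⟩ <;> simp_all
    · exact h.symm
  · intro h
    exact ⟨by simp [h.ne], Or.inl (Or.inl ⟨x, y, rfl, rfl, h⟩)⟩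

lemma sumGraph_adj_rr {α β : Type*} (G : SimpleGraph α) (K : SimpleGraph β) {x y : β} :
    (sumGraph G K).Adj (Sum.inr x) (Sum.inr y) ↔ K.Adj x y := by
  simp only [sumGraph, fromRel_adj]
  constructor
  · rintro ⟨hne, (⟨x', y', hx, hy, h⟩ | ⟨x', y', hx, hy, h⟩) |
      (⟨x', y', hx, hy, h⟩ | ⟨x', y', hx, hy, h⟩)⟩ <;> simp_all
    · exact h.symm
  · intro h
    exact ⟨by simp [h.ne], Or.inl (Or.inr ⟨x, y, rfl, rfl, h⟩)⟩

lemma sumGraph_not_lr {α β : Type*} (G : SimpleGraph α) (K : SimpleGraph β) {x : α} {y : β} :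
    ¬ (sumGraph G K).Adj (Sum.inl x) (Sum.inr y) := by
  simp only [sumGraph, fromRel_adj]
  rintro ⟨hne, (⟨x', y', hx, hy, h⟩ | ⟨x', y', hx, hy, h⟩) |
      (⟨x', y', hx, hy, h⟩ | ⟨x', y', hx, hy, h⟩)⟩ <;> simp_all

lemma sumGraph_not_rl {α β : Type*} (G : SimpleGraph α) (K : SimpleGraph β) {x : α} {y : β} :
    ¬ (sumGraph G K).Adj (Sum.inr y) (Sum.inl x) := fun h => sumGraph_not_lr G K h.symm

lemma sumGraph_cases {α β : Type*} {G : SimpleGraph α} {K : SimpleGraph β} {a b : α ⊕ β}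
    (h : (sumGraph G K).Adj a b) :
    (∃ x y, a = Sum.inl x ∧ b = Sum.inl y ∧ G.Adj x y) ∨
    (∃ x y, a = Sum.inr x ∧ b = Sum.inr y ∧ K.Adj x y) := by
  match a, b with
  | Sum.inl x, Sum.inl y => exact Or.inl ⟨x, y, rfl, rfl, (sumGraph_adj_ll G K).mp h⟩
  | Sum.inl x, Sum.inr y => exact absurd h (sumGraph_not_lr G K)
  | Sum.inr x, Sum.inl y => exact absurd h (sumGraph_not_rl G K)
  | Sum.inr x, Sum.inr y => exact Or.inr ⟨x, y, rfl, rfl, (sumGraph_adj_rr G K).mp h⟩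

lemma starStarQ_not_leaves {p : ℕ} {x y : Fin 2 × Fin p} :
    ¬ (starStarQ p).Adj (Sum.inr x) (Sum.inr y) := by
  simp only [starStarQ, fromRel_adj]
  rintro ⟨hne, (⟨h1, h2⟩ | ⟨i, j, h1, h2⟩) | (⟨h1, h2⟩ | ⟨i, j, h1, h2⟩)⟩ <;> simp_all

lemma starStarQ_adj_cl {p : ℕ} {i i' : Fin 2} {j : Fin p} :
    (starStarQ p).Adj (Sum.inl i) (Sum.inr (i', j)) ↔ i = i' := by
  simp only [starStarQ, fromRel_adj]
  constructor
  · rintro ⟨hne, (⟨h1, h2⟩ | ⟨i'', j', h1, h2⟩) | (⟨h1, h2⟩ | ⟨i'', j', h1, h2⟩)⟩ <;> simp_all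
  · rintro rfl
    exact ⟨by simp, Or.inl (Or.inr ⟨i, j, rfl, rfl⟩)⟩

lemma starStarQ_adj_cc {p : ℕ} :
    (starStarQ p).Adj (Sum.inl 0) (Sum.inl 1) := by
  simp only [starStarQ, fromRel_adj]
  exact ⟨by simp, Or.inl (Or.inl (by simp))⟩

-- ===== iso criteria =====

lemma pK1K2_adj {p : ℕ} {a b : Fin p ⊕ Fin 2} :
    (pK1K2 p).Adj a b ↔ a ≠ b ∧ a.isRight ∧ b.isRight := by
  simp only [pK1K2, fromRel_adj]
  tauto

lemma isoOne {p : ℕ} {α : Type*} (Γ : SimpleGraph α) (S : Set α) (a b : α)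
    (ha : a ∈ S) (hb : b ∈ S) (hab : a ≠ b) (hS : S.Finite) (hcard : S.ncard = p + 2)
    (hadj : ∀ u ∈ S, ∀ v ∈ S, Γ.Adj u v ↔ (u = a ∧ v = b) ∨ (u = b ∧ v = a)) :
    Nonempty ((Γ.induce S) ≃g pK1K2 p) := by
  classical
  set T : Set α := S \ {a, b} with hT
  have hsub : ({a, b} : Set α) ⊆ S := by
    intro x hx; rcases hx with h | h <;> simp_all
  have hTcard : T.ncard = p := by
    rw [hT, Set.ncard_diff hsub, Set.ncard_pair hab, hcard]; omega
  haveI : Fintype ↥T := (hS.diff (t := {a, b})).fintype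
  have hTc : Fintype.card ↥T = p := by
    rw [← Nat.card_eq_fintype_card, Nat.card_coe_set_eq]; exact hTcard
  let eT : ↥T ≃ Fin p := Fintype.equivFinOfCardEq hTc
  let g : Fin p ⊕ Fin 2 → ↥S := Sum.elim
    (fun j => ⟨(eT.symm j).1, (eT.symm j).2.1⟩)
    (fun k => if k = 0 then ⟨a, ha⟩ else ⟨b, hb⟩)
  have hgl : ∀ j : Fin p, ((g (Sum.inl j)) : α) = (eT.symm j).1 := fun j => rfl
  have hg0 : ((g (Sum.inr 0)) : α) = a := rfl
  have hg1 : ((g (Sum.inr 1)) : α) = b := rfl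
  have hgne : ∀ j : Fin p, ((g (Sum.inl j)) : α) ≠ a ∧ ((g (Sum.inl j)) : α) ≠ b := by
    intro j
    have h2 := (eT.symm j).2.2
    simp only [Set.mem_insert_iff, Set.mem_singleton_iff] at h2
    rw [hgl]
    exact ⟨fun h => h2 (Or.inl h), fun h => h2 (Or.inr h)⟩
  have hbij : Function.Bijective g := by
    constructor
    · intro c d hcd
      match c, d with
      | Sum.inl j1, Sum.inl j2 =>
          have h' : ((g (Sum.inl j1)) : α) = ((g (Sum.inl j2)) : α) := congrArg Subtype.val hcd
          rw [hgl, hgl] at h'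
          have h'' : eT.symm j1 = eT.symm j2 := Subtype.ext h'
          simpa using congrArg eT h''
      | Sum.inl j1, Sum.inr k =>
          exfalso
          have h' : ((g (Sum.inl j1)) : α) = ((g (Sum.inr k)) : α) := congrArg Subtype.val hcd
          fin_cases k
          · exact (hgne j1).1 (h'.trans hg0)
          · exact (hgne j1).2 (h'.trans hg1)
      | Sum.inr k, Sum.inl j1 =>
          exfalso
          have h' : ((g (Sum.inr k)) : α) = ((g (Sum.inl j1)) : α) := congrArg Subtype.val hcd
          fin_cases k
          · exact (hgne j1).1 (hg0 ▸ h'.symm)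
          · exact (hgne j1).2 (hg1 ▸ h'.symm)
      | Sum.inr k1, Sum.inr k2 =>
          have h' : ((g (Sum.inr k1)) : α) = ((g (Sum.inr k2)) : α) := congrArg Subtype.val hcd
          fin_cases k1 <;> fin_cases k2
          · rfl
          · exact absurd (hg0.symm.trans (h'.trans hg1)) hab
          · exact absurd ((hg1.symm.trans (h'.trans hg0)).symm) hab
          · rfl
    · intro s
      by_cases hsa : (s : α) = a
      · exact ⟨Sum.inr 0, Subtype.ext (hg0.trans hsa.symm)⟩
      · by_cases hsb : (s : α) = b
        · exact ⟨Sum.inr 1, Subtype.ext (hg1.trans hsb.symm)⟩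
        · refine ⟨Sum.inl (eT ⟨(s : α), ⟨s.2, ?_⟩⟩), ?_⟩
          · simp [hsa, hsb]
          · apply Subtype.ext
            rw [hgl, Equiv.symm_apply_apply]
  let E := Equiv.ofBijective g hbij
  have hE : ∀ c, (E c : α) = (g c : α) := fun c => rfl
  have key : ∀ c d, (Γ.induce S).Adj (E c) (E d) ↔ (pK1K2 p).Adj c d := by
    intro c d
    have hind : (Γ.induce S).Adj (E c) (E d) ↔ Γ.Adj ((E c) : α) ((E d) : α) := by
      simp [comap_adj]
    rw [hind, hE, hE, hadj _ (g c).2 _ (g d).2, pK1K2_adj]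
    match c, d with
    | Sum.inl j1, Sum.inl j2 =>
        simp [Sum.isRight, (hgne j1).1, (hgne j1).2]
    | Sum.inl j1, Sum.inr k =>
        fin_cases k <;>
          simp [hg0, hg1, Sum.isRight, (hgne j1).1, (hgne j1).2, hab, hab.symm]
    | Sum.inr k, Sum.inl j1 =>
        fin_cases k <;>
          simp [hg0, hg1, Sum.isRight, (hgne j1).1, (hgne j1).2, hab, hab.symm]
    | Sum.inr k1, Sum.inr k2 =>
        fin_cases k1 <;> fin_cases k2 <;>
          simp [hg0, hg1, Sum.isRight, hab, hab.symm]
  exact ⟨(RelIso.mk E (fun {c d} => key c d)).symm⟩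

lemma isoTwo {p : ℕ} {α : Type*} (Γ : SimpleGraph α) (S : Set α)
    (h : Nonempty ((Γ.induce S) ≃g pK1K2 p)) :
    S.ncard = p + 2 ∧ ∃ a ∈ S, ∃ b ∈ S, a ≠ b ∧ Γ.Adj a b ∧
      ∀ u ∈ S, ∀ v ∈ S, Γ.Adj u v → (u = a ∧ v = b) ∨ (u = b ∧ v = a) := by
  classical
  obtain ⟨f⟩ := h
  have hcongr : Nat.card ↥S = Nat.card (Fin p ⊕ Fin 2) := Nat.card_congr f.toEquiv
  have hcard : S.ncard = p + 2 := by
    rw [← Nat.card_coe_set_eq, hcongr]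
    simp
  set A : ↥S := f.symm (Sum.inr 0) with hA
  set B : ↥S := f.symm (Sum.inr 1) with hB
  have hQ : (pK1K2 p).Adj (Sum.inr 0) (Sum.inr 1) := by
    rw [pK1K2_adj]; simp
  have hADJ : (Γ.induce S).Adj A B := f.symm.map_adj_iff.mpr hQ
  have hΓ : Γ.Adj (A : α) (B : α) := by
    simpa [comap_adj] using hADJ
  refine ⟨hcard, (A : α), A.2, (B : α), B.2, hΓ.ne, hΓ, ?_⟩
  intro u hu v hv huv
  have hadj : (Γ.induce S).Adj ⟨u, hu⟩ ⟨v, hv⟩ := by simpa [comap_adj] using huv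
  have hfp : (pK1K2 p).Adj (f ⟨u, hu⟩) (f ⟨v, hv⟩) := f.map_adj_iff.mpr hadj
  rw [pK1K2_adj] at hfp
  obtain ⟨hne, hr1, hr2⟩ := hfp
  obtain ⟨k1, hk1⟩ := Sum.isRight_iff.mp hr1
  obtain ⟨k2, hk2⟩ := Sum.isRight_iff.mp hr2
  have hk12 : k1 ≠ k2 := by rintro rfl; exact hne (hk1.trans hk2.symm)
  have hback : ∀ (w : α) (hw : w ∈ S) (k : Fin 2), f ⟨w, hw⟩ = Sum.inr k →
      (k = 0 → w = (A : α)) ∧ (k = 1 → w = (B : α)) := by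
    intro w hw k hk
    constructor
    · rintro rfl
      have h2 : f.symm (Sum.inr 0) = ⟨w, hw⟩ := by
        rw [← hk]; exact f.toEquiv.symm_apply_apply _
      rw [hA, h2]
    · rintro rfl
      have h2 : f.symm (Sum.inr 1) = ⟨w, hw⟩ := by
        rw [← hk]; exact f.toEquiv.symm_apply_apply _
      rw [hB, h2]
  fin_cases k1 <;> fin_cases k2
  · exact absurd rfl hk12
  · exact Or.inl ⟨(hback u hu 0 hk1).1 rfl, (hback v hv 1 hk2).2 rfl⟩
  · exact Or.inr ⟨(hback u hu 1 hk1).2 rfl, (hback v hv 0 hk2).1 rfl⟩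
  · exact absurd rfl hk12

-- ===== closure failure =====

lemma closureFail {p : ℕ} {α : Type*} (G' H : SimpleGraph α) (hle : H ≤ G') {x y : α}
    (hxy : H.Adj x y) (T : Set α) (hTfin : T.Finite) (hTcard : T.ncard = p)
    (hxT : x ∉ T) (hyT : y ∉ T)
    (hTind : ∀ t1 ∈ T, ∀ t2 ∈ T, ¬ G'.Adj t1 t2)
    (hTx : ∀ t ∈ T, ¬ G'.Adj x t ∧ ¬ G'.Adj y t) :
    ¬ SatisfiesClosure G' H (pK1K2 p) := by
  intro hcl
  have hxyG : G'.Adj x y := hle hxy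
  have hxy' : x ≠ y := hxy.ne
  set S : Set α := insert x (insert y T) with hSdef
  have hxS : x ∈ S := Set.mem_insert _ _
  have hyS : y ∈ S := Set.mem_insert_of_mem _ (Set.mem_insert _ _)
  have hSfin : S.Finite := (hTfin.insert y).insert x
  have hxyT : x ∉ insert y T := by simp [hxy', hxT]
  have hScard : S.ncard = p + 2 := by
    rw [hSdef, Set.ncard_insert_of_notMem hxyT ((hTfin.insert y)),
      Set.ncard_insert_of_notMem hyT hTfin, hTcard]
  have honly : ∀ u ∈ S, ∀ v ∈ S, G'.Adj u v → (u = x ∧ v = y) ∨ (u = y ∧ v = x) := by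
    intro u hu v hv huv
    rcases hu with rfl | hu
    · rcases hv with rfl | hv
      · exact absurd huv (G'.irrefl)
      · rcases hv with rfl | hv
        · exact Or.inl ⟨rfl, rfl⟩
        · exact absurd huv (hTx v hv).1
    · rcases hu with rfl | hu
      · rcases hv with rfl | hv
        · exact Or.inr ⟨rfl, rfl⟩
        · rcases hv with rfl | hv
          · exact absurd huv (G'.irrefl)
          · exact absurd huv (hTx v hv).2
      · rcases hv with rfl | hv
        · exact absurd huv.symm (hTx u hu).1
        · rcases hv with rfl | hv
          · exact absurd huv.symm (hTx u hu).2
          · exact absurd huv (hTind u hu v hv)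
  have hadjG : ∀ u ∈ S, ∀ v ∈ S, G'.Adj u v ↔ (u = x ∧ v = y) ∨ (u = y ∧ v = x) := by
    intro u hu v hv
    refine ⟨honly u hu v hv, ?_⟩
    rintro (⟨rfl, rfl⟩ | ⟨rfl, rfl⟩)
    · exact hxyG
    · exact hxyG.symm
  have hadjH : ∀ u ∈ S, ∀ v ∈ S, H.Adj u v ↔ (u = x ∧ v = y) ∨ (u = y ∧ v = x) := by
    intro u hu v hv
    refine ⟨fun h => honly u hu v hv (hle h), ?_⟩
    rintro (⟨rfl, rfl⟩ | ⟨rfl, rfl⟩)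
    · exact hxy
    · exact hxy.symm
  exact hcl S (isoOne H S x y hxS hyS hxy' hSfin hScard hadjH)
    (isoOne G' S x y hxS hyS hxy' hSfin hScard hadjG)

theorem stmt_4 {V : Type*} [Fintype V] (G : SimpleGraph V) (p : ℕ) (hp : 1 ≤ p) :
    (∃ H ≤ sumGraph G (starStarQ p),
      SatisfiesClosure (sumGraph G (starStarQ p)) H (pK1K2 p) ∧ 1 ≤ H.edgeSet.ncard) ↔
    ¬ ∃ S : Set V, (S.Pairwise fun x y => ¬ G.Adj x y) ∧ S.ncard = p := by
  classical
  set G' := sumGraph G (starStarQ p) with hG'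
  set u : V ⊕ (Fin 2 ⊕ Fin 2 × Fin p) := Sum.inr (Sum.inl 0) with hu
  set v : V ⊕ (Fin 2 ⊕ Fin 2 × Fin p) := Sum.inr (Sum.inl 1) with hv
  have huv : u ≠ v := by simp [hu, hv]
  have hG'uv : G'.Adj u v := (sumGraph_adj_rr _ _).mpr starStarQ_adj_cc
  have hii : ∀ i : Fin 2, (1 - i) ≠ i := by decide
  have leafinj : ∀ i : Fin 2, Function.Injective
      (fun j : Fin p => (Sum.inr (Sum.inr (i, j)) : V ⊕ (Fin 2 ⊕ Fin 2 × Fin p))) := by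
    intro i a b h; simpa using h
  have leafcard : ∀ i : Fin 2, (Set.range fun j : Fin p =>
      (Sum.inr (Sum.inr (i, j)) : V ⊕ (Fin 2 ⊕ Fin 2 × Fin p))).ncard = p := by
    intro i
    rw [← Set.image_univ, Set.ncard_image_of_injective _ (leafinj i), Set.ncard_univ]
    simp
  have leafind : ∀ i : Fin 2, ∀ t1 ∈ (Set.range fun j : Fin p =>
      (Sum.inr (Sum.inr (i, j)) : V ⊕ (Fin 2 ⊕ Fin 2 × Fin p))),
      ∀ t2 ∈ (Set.range fun j : Fin p =>
      (Sum.inr (Sum.inr (i, j)) : V ⊕ (Fin 2 ⊕ Fin 2 × Fin p))), ¬ G'.Adj t1 t2 := by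
    rintro i t1 ⟨j1, rfl⟩ t2 ⟨j2, rfl⟩ hadj
    rw [hG', sumGraph_adj_rr] at hadj
    exact starStarQ_not_leaves hadj
  constructor
  · rintro ⟨H, hle, hcl, hE⟩ ⟨A, hA, hAcard⟩
    have hne0 : H.edgeSet.Nonempty := Set.nonempty_of_ncard_ne_zero (by omega)
    have hEx : ∃ x y, H.Adj x y := by
      obtain ⟨e, he⟩ := hne0
      induction e using Sym2.ind with
      | _ x y => exact ⟨x, y, he⟩
    obtain ⟨x, y, hxy⟩ := hEx
    rcases sumGraph_cases (hle hxy) with ⟨g1, g2, rfl, rfl, hgg⟩ | ⟨q1, q2, rfl, rfl, hQQ⟩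
    · -- edge inside G : use leaves of center 0
      refine closureFail G' H hle hxy _ (Set.toFinite _) (leafcard 0) ?_ ?_ (leafind 0) ?_ hcl
      · rintro ⟨j, h⟩; simp at h
      · rintro ⟨j, h⟩; simp at h
      · rintro t ⟨j, rfl⟩
        exact ⟨sumGraph_not_lr _ _, sumGraph_not_lr _ _⟩
    · -- edge inside Q
      rw [starStarQ, fromRel_adj] at hQQ
      obtain ⟨hneq, hrel⟩ := hQQ
      have centerCase : ∀ (x' y' : V ⊕ (Fin 2 ⊕ Fin 2 × Fin p)), H.Adj x' y' →
          x' = u ∨ x' = v → y' = u ∨ y' = v → False := by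
        intro x' y' hxy' hx' hy'
        refine closureFail G' H hle hxy' (Sum.inl '' A) (Set.toFinite _) ?_ ?_ ?_ ?_ ?_ hcl
        · rw [Set.ncard_image_of_injective _ Sum.inl_injective]; exact hAcard
        · rintro ⟨a, _, h⟩; rcases hx' with rfl | rfl <;> simp [hu, hv] at h
        · rintro ⟨a, _, h⟩; rcases hy' with rfl | rfl <;> simp [hu, hv] at h
        · rintro t1 ⟨a1, ha1, rfl⟩ t2 ⟨a2, ha2, rfl⟩ hadj
          rw [hG', sumGraph_adj_ll] at hadj
          rcases eq_or_ne a1 a2 with rfl | hne12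
          · exact G.irrefl hadj
          · exact hA ha1 ha2 hne12 hadj
        · rintro t ⟨a, _, rfl⟩
          constructor
          · rcases hx' with rfl | rfl <;> exact sumGraph_not_rl _ _
          · rcases hy' with rfl | rfl <;> exact sumGraph_not_rl _ _
      have leafCase : ∀ (i : Fin 2) (j : Fin p) (x' y' : V ⊕ (Fin 2 ⊕ Fin 2 × Fin p)),
          H.Adj x' y' →
          (x' = Sum.inr (Sum.inl i) ∨ x' = Sum.inr (Sum.inr (i, j))) →
          (y' = Sum.inr (Sum.inl i) ∨ y' = Sum.inr (Sum.inr (i, j))) → False := by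
        intro i j x' y' hxy' hx' hy'
        refine closureFail G' H hle hxy' _ (Set.toFinite _) (leafcard (1 - i)) ?_ ?_
          (leafind (1 - i)) ?_ hcl
        · rintro ⟨k, h⟩
          rcases hx' with rfl | rfl
          · simp at h
          · simp only [Sum.inr.injEq, Prod.mk.injEq] at h
            exact hii i h.1
        · rintro ⟨k, h⟩
          rcases hy' with rfl | rfl
          · simp at h
          · simp only [Sum.inr.injEq, Prod.mk.injEq] at h
            exact hii i h.1
        · rintro t ⟨k, rfl⟩
          have hnc : ¬ G'.Adj (Sum.inr (Sum.inl i)) (Sum.inr (Sum.inr (1 - i, k))) := by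
            rw [hG', sumGraph_adj_rr, starStarQ_adj_cl]
            exact fun h => hii i h.symm
          have hnl : ¬ G'.Adj (Sum.inr (Sum.inr (i, j))) (Sum.inr (Sum.inr (1 - i, k))) := by
            rw [hG', sumGraph_adj_rr]
            exact starStarQ_not_leaves
          constructor
          · rcases hx' with rfl | rfl
            · exact hnc
            · exact hnl
          · rcases hy' with rfl | rfl
            · exact hnc
            · exact hnl
      rcases hrel with (⟨rfl, rfl⟩ | ⟨i, j, rfl, rfl⟩) | (⟨rfl, rfl⟩ | ⟨i, j, rfl, rfl⟩)
      · exact centerCase _ _ hxy (Or.inl rfl) (Or.inr rfl)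
      · exact leafCase i j _ _ hxy (Or.inl rfl) (Or.inr rfl)
      · exact centerCase _ _ hxy (Or.inr rfl) (Or.inl rfl)
      · exact leafCase i j _ _ hxy (Or.inr rfl) (Or.inl rfl)
  · intro hno
    set H := SimpleGraph.fromEdgeSet {s(u, v)} with hH
    have hHadj : ∀ a b, H.Adj a b ↔ (a = u ∧ b = v) ∨ (a = v ∧ b = u) := by
      intro a b
      rw [hH, fromEdgeSet_adj]
      simp only [Set.mem_singleton_iff, Sym2.eq_iff]
      constructor
      · rintro ⟨h, _⟩; exact h
      · rintro (⟨rfl, rfl⟩ | ⟨rfl, rfl⟩)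
        · exact ⟨Or.inl ⟨rfl, rfl⟩, huv⟩
        · exact ⟨Or.inr ⟨rfl, rfl⟩, huv.symm⟩
    have hle : H ≤ G' := by
      intro a b hab
      rcases (hHadj a b).mp hab with ⟨rfl, rfl⟩ | ⟨rfl, rfl⟩
      · exact hG'uv
      · exact hG'uv.symm
    have hEdge : H.edgeSet = {s(u, v)} := by
      rw [hH, edgeSet_fromEdgeSet]
      ext e
      simp only [Set.mem_diff, Set.mem_singleton_iff, Set.mem_setOf_eq]
      constructor
      · rintro ⟨h, _⟩; exact h
      · rintro rfl
        exact ⟨rfl, by simp [Sym2.mk_isDiag_iff, huv]⟩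
    refine ⟨H, hle, ?_, by rw [hEdge]; simp⟩
    intro S hHS hGS
    obtain ⟨hScard, a, haS, b, hbS, hab, hHab, _⟩ := isoTwo H S hHS
    obtain ⟨_, a', ha'S, b', hb'S, ha'b', hG'ab, huniqG⟩ := isoTwo G' S hGS
    have huS : u ∈ S ∧ v ∈ S := by
      rcases (hHadj a b).mp hHab with ⟨rfl, rfl⟩ | ⟨rfl, rfl⟩
      · exact ⟨haS, hbS⟩
      · exact ⟨hbS, haS⟩
    obtain ⟨huS, hvS⟩ := huS
    have hpair := huniqG u huS v hvS hG'uv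
    have huniq : ∀ w1 ∈ S, ∀ w2 ∈ S, G'.Adj w1 w2 →
        (w1 = u ∧ w2 = v) ∨ (w1 = v ∧ w2 = u) := by
      intro w1 h1 w2 h2 hw
      rcases huniqG w1 h1 w2 h2 hw with ⟨rfl, rfl⟩ | ⟨rfl, rfl⟩ <;>
        rcases hpair with ⟨h3, h4⟩ | ⟨h3, h4⟩ <;> tauto
    have hmem : ∀ w ∈ S, w = u ∨ w = v ∨ ∃ x : V, w = Sum.inl x := by
      intro w hw
      match w with
      | Sum.inl x => exact Or.inr (Or.inr ⟨x, rfl⟩)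
      | Sum.inr (Sum.inl i) =>
          fin_cases i
          · exact Or.inl rfl
          · exact Or.inr (Or.inl rfl)
      | Sum.inr (Sum.inr (i, j)) =>
          exfalso
          have hcen : (Sum.inr (Sum.inl i) : V ⊕ (Fin 2 ⊕ Fin 2 × Fin p)) ∈ S := by
            fin_cases i
            · exact huS
            · exact hvS
          have hadjwc : G'.Adj (Sum.inr (Sum.inr (i, j))) (Sum.inr (Sum.inl i)) := by
            rw [hG', sumGraph_adj_rr]
            exact ((starStarQ_adj_cl).mpr rfl).symm
          rcases huniq _ hw _ hcen hadjwc with ⟨h, _⟩ | ⟨h, _⟩ <;> simp [hu, hv] at h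
    set AA : Set V := {x | Sum.inl x ∈ S} with hAA
    have hSeq : S = insert u (insert v (Sum.inl '' AA)) := by
      ext w
      simp only [Set.mem_insert_iff, Set.mem_image]
      constructor
      · intro hw
        rcases hmem w hw with rfl | rfl | ⟨x, rfl⟩
        · exact Or.inl rfl
        · exact Or.inr (Or.inl rfl)
        · exact Or.inr (Or.inr ⟨x, hw, rfl⟩)
      · rintro (rfl | rfl | ⟨x, hx, rfl⟩)
        · exact huS
        · exact hvS
        · exact hx
    have hpw : AA.Pairwise fun x y => ¬ G.Adj x y := by
      intro x1 h1 x2 h2 hne hadj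
      have hG2 : G'.Adj (Sum.inl x1) (Sum.inl x2) := by
        rw [hG', sumGraph_adj_ll]; exact hadj
      rcases huniq _ h1 _ h2 hG2 with ⟨h, _⟩ | ⟨h, _⟩ <;> simp [hu, hv] at h
    have hAcard : AA.ncard = p := by
      have h1 : u ∉ insert v (Sum.inl '' AA) := by simp [hu, hv]
      have h2 : v ∉ Sum.inl '' AA := by simp [hv]
      rw [hSeq, Set.ncard_insert_of_notMem h1 (Set.toFinite _),
        Set.ncard_insert_of_notMem h2 (Set.toFinite _),
        Set.ncard_image_of_injective _ Sum.inl_injective] at hScard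
      omega
    exact hno ⟨AA, hpw, hAcard⟩
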